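/- Let N ≥ 2 be an integer, let ε ≠ 0 be a real number, and set α_ε = ε(ε + N − 2) and α_1 = N − 1. Define F(α) = ((ε−2)² + α)·(α_ε − α)²/(ε² + α) for α ≥ 0. Then the derivative F′(α) is nonnegative for all α ≥ max{α_1, α_ε}. -/

import Mathlib

theorem deriv_rellich_profile_nonneg (N : ℕ) (hN : 2 ≤ N) (ε : ℝ) (hε : ε ≠ 0) :
    ∀ α : ℝ, max ((N : ℝ) - 1) (ε * (ε + N - 2)) ≤ α →
      0 ≤ deriv (fun a : ℝ =>
        (((ε - 2) ^ 2 + a) * (ε * (ε + N - 2) - a) ^ 2) / (ε ^ 2 + a)) α := by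
  intro α hα
  have hN' : (2:ℝ) ≤ N := by exact_mod_cast hN
  have h1 : (N:ℝ) - 1 ≤ α := le_trans (le_max_left _ _) hα
  have h2 : ε * (ε + N - 2) ≤ α := le_trans (le_max_right _ _) hα
  have hα1 : (1:ℝ) ≤ α := by linarith
  have hεsq : 0 < ε ^ 2 := by positivity
  have hv : 0 < ε ^ 2 + α := by linarith
  have hu : HasDerivAt (fun a : ℝ => ((ε - 2) ^ 2 + a) * (ε * (ε + N - 2) - a) ^ 2)
      ((ε * (ε + N - 2) - α) ^ 2 + ((ε - 2) ^ 2 + α) * (2 * (ε * (ε + N - 2) - α) * (-1))) α := by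
    have ha : HasDerivAt (fun a : ℝ => (ε - 2) ^ 2 + a) 1 α := (hasDerivAt_id α).const_add _
    have hb : HasDerivAt (fun a : ℝ => ε * (ε + N - 2) - a) (-1) α := (hasDerivAt_id α).const_sub _
    have hb2 : HasDerivAt (fun a : ℝ => (ε * (ε + N - 2) - a) ^ 2) _ α := hb.pow 2
    have : HasDerivAt (fun a : ℝ => ((ε - 2) ^ 2 + a) * (ε * (ε + N - 2) - a) ^ 2) _ α := ha.mul hb2
    convert this using 1
    ring
  have hw : HasDerivAt (fun a : ℝ => ε ^ 2 + a) 1 α := (hasDerivAt_id α).const_add _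
  have hd : HasDerivAt (fun a : ℝ => (((ε - 2) ^ 2 + a) * (ε * (ε + N - 2) - a) ^ 2) / (ε ^ 2 + a)) _ α :=
    hu.div hw (ne_of_gt hv)
  rw [hd.deriv]
  apply div_nonneg _ (sq_nonneg _)
  have ht : 0 ≤ α - ε * (ε + ↑N - 2) := by linarith
  have hm0 : (0:ℝ) ≤ (N:ℝ) - 2 := by linarith
  have hm1 : (N:ℝ) - 2 ≤ α - 1 := by linarith
  have hB : 0 ≤ 4 * (ε - 1) * (α - ε * (ε + ↑N - 2)) + 2 * ((ε - 2) ^ 2 + α) * (ε ^ 2 + α) := by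
    rcases le_or_gt ε 0 with h | h
    · nlinarith [mul_nonneg (by linarith : (0:ℝ) ≤ α - 1 - ((N:ℝ) - 2))
        (by nlinarith : (0:ℝ) ≤ ε ^ 2 - ε),
        mul_nonneg (mul_nonneg (neg_nonneg.2 h) (neg_nonneg.2 h)) (neg_nonneg.2 h),
        sq_nonneg ε, sq_nonneg (ε ^ 2), mul_nonneg (neg_nonneg.2 h) hεsq.le]
    · rcases le_or_gt ε 1 with h1' | h1'
      · nlinarith [mul_nonneg hm0 (mul_nonneg h.le (by linarith : (0:ℝ) ≤ 1 - ε)),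
          mul_nonneg hεsq.le (by linarith : (0:ℝ) ≤ 1 - ε),
          mul_nonneg (by linarith : (0:ℝ) ≤ α) (by linarith : (0:ℝ) ≤ 1 - ε),
          sq_nonneg (ε ^ 2), sq_nonneg α, mul_nonneg (by linarith : (0:ℝ) ≤ α) hεsq.le]
      · have hαε : ε ^ 2 ≤ α := by nlinarith [mul_nonneg hm0 h.le]
        nlinarith [mul_nonneg (by linarith : (0:ℝ) ≤ α - 1 - ((N:ℝ) - 2))
            (by nlinarith : (0:ℝ) ≤ ε ^ 2 - ε),
          mul_nonneg (by linarith : (0:ℝ) ≤ α - ε ^ 2) (by positivity : (0:ℝ) ≤ α + ε ^ 2),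
          mul_nonneg (by nlinarith : (0:ℝ) ≤ ε * (ε - 1)) (sq_nonneg (ε - 1))]
  have key := mul_nonneg ht hB
  nlinarith [key]
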